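/- Let p : ℝ → ℝ be continuous, φ(t) = t + ∫₀ᵗ p(s) ds, and define X(t) = -∫₀ᵗ (1 - p(τ)) sin φ(τ) dτ, Y(t) = ∫₀ᵗ (1 - p(τ)) cos φ(τ) dτ. If x solves the Schrödinger equation x'' + p(t)x = 0 with (x(t), x'(t)) ≠ (0,0) for all t, and θ is a differentiable function with θ(t) = 2 arg(x(t) + i x'(t)) + φ(t) (where arg is a continuous branch), then θ solves the bicycle equation θ' = Y' cos θ - X' sin θ. -/

import Mathlib

open Real intervalIntegral

theorem stmt4
    (p x dx α φ θ X Y : ℝ → ℝ)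
    (hp : Continuous p)
    (hx : ∀ t, HasDerivAt x (dx t) t)
    (hx' : ∀ t, HasDerivAt dx (-(p t * x t)) t)
    (hpos : ∀ t, x t ^ 2 + dx t ^ 2 > 0)
    (hφ : ∀ t, φ t = t + ∫ s in (0:ℝ)..t, p s)
    (hcos : ∀ t, Real.cos (α t) = x t / Real.sqrt (x t ^ 2 + dx t ^ 2))
    (hsin : ∀ t, Real.sin (α t) = dx t / Real.sqrt (x t ^ 2 + dx t ^ 2))
    (hα : Differentiable ℝ α)
    (hθ : ∀ t, θ t = 2 * α t + φ t)
    (hX : ∀ t, X t = -∫ τ in (0:ℝ)..t, (1 - p τ) * Real.sin (φ τ))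
    (hY : ∀ t, Y t = ∫ τ in (0:ℝ)..t, (1 - p τ) * Real.cos (φ τ)) :
    ∀ t, HasDerivAt θ (deriv Y t * Real.cos (θ t) - deriv X t * Real.sin (θ t)) t := by
  -- derivative of φ
  have hφd : ∀ t, HasDerivAt φ (1 + p t) t := by
    intro t
    have h1 : HasDerivAt (fun u : ℝ => u + ∫ s in (0:ℝ)..u, p s) (1 + p t) t := by
      exact (hasDerivAt_id t).add
        (intervalIntegral.integral_hasDerivAt_right (hp.intervalIntegrable 0 t)
          (hp.aestronglyMeasurable.stronglyMeasurableAtFilter) hp.continuousAt)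
    exact (funext hφ ▸ h1 :)
  have hφc : Continuous φ := by
    have : Differentiable ℝ φ := fun t => (hφd t).differentiableAt
    exact this.continuous
  -- derivatives of X and Y
  intro t
  have hYd : HasDerivAt Y ((1 - p t) * Real.cos (φ t)) t := by
    have hc : Continuous fun τ => (1 - p τ) * Real.cos (φ τ) :=
      (continuous_const.sub hp).mul (Real.continuous_cos.comp hφc)
    have h1 : HasDerivAt (fun u : ℝ => ∫ τ in (0:ℝ)..u, (1 - p τ) * Real.cos (φ τ))
        ((1 - p t) * Real.cos (φ t)) t :=
      intervalIntegral.integral_hasDerivAt_right (hc.intervalIntegrable 0 t)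
        (hc.aestronglyMeasurable.stronglyMeasurableAtFilter) hc.continuousAt
    exact (funext hY ▸ h1 :)
  have hXd : HasDerivAt X (-((1 - p t) * Real.sin (φ t))) t := by
    have hc : Continuous fun τ => (1 - p τ) * Real.sin (φ τ) :=
      (continuous_const.sub hp).mul (Real.continuous_sin.comp hφc)
    have h1 : HasDerivAt (fun u : ℝ => -∫ τ in (0:ℝ)..u, (1 - p τ) * Real.sin (φ τ))
        (-((1 - p t) * Real.sin (φ t))) t :=
      (intervalIntegral.integral_hasDerivAt_right (hc.intervalIntegrable 0 t)
        (hc.aestronglyMeasurable.stronglyMeasurableAtFilter) hc.continuousAt).neg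
    exact (funext hX ▸ h1 :)
  rw [hYd.deriv, hXd.deriv]
  -- set up r
  set r : ℝ → ℝ := fun s => Real.sqrt (x s ^ 2 + dx s ^ 2) with hr
  have hrpos : ∀ s, 0 < r s := fun s => Real.sqrt_pos.2 (hpos s)
  have hrsq : ∀ s, r s ^ 2 = x s ^ 2 + dx s ^ 2 := fun s =>
    Real.sq_sqrt (hpos s).le
  have hqd : ∀ s, HasDerivAt (fun u => x u ^ 2 + dx u ^ 2)
      (2 * (x s * dx s) * (1 - p s)) s := by
    intro s
    have := ((hx s).pow 2).add ((hx' s).pow 2)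
    exact this.congr_deriv (by norm_num; ring)
  have hrd : ∀ s, HasDerivAt r (x s * dx s * (1 - p s) / r s) s := by
    intro s
    have h1 := (Real.hasDerivAt_sqrt (ne_of_gt (hpos s))).comp s (hqd s)
    refine h1.congr_deriv ?_
    simp only [hr]
    field_simp
  -- derivative of α
  set a : ℝ → ℝ := fun s => deriv α s with ha
  have had : ∀ s, HasDerivAt α (a s) s := fun s => (hα s).hasDerivAt
  have key : a t = (-(p t * x t ^ 2) - dx t ^ 2) / (x t ^ 2 + dx t ^ 2) := by
    -- derivative of cos ∘ α and x / r
    have hc1 : HasDerivAt (fun s => Real.cos (α s)) (-Real.sin (α t) * a t) t :=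
      (Real.hasDerivAt_cos (α t)).comp t (had t)
    have hc2 : HasDerivAt (fun s => x s / r s)
        ((dx t * r t - x t * (x t * dx t * (1 - p t) / r t)) / r t ^ 2) t :=
      (hx t).div (hrd t) (ne_of_gt (hrpos t))
    have hceq : (fun s => Real.cos (α s)) = fun s => x s / r s := funext hcos
    have E1 : -Real.sin (α t) * a t
        = (dx t * r t - x t * (x t * dx t * (1 - p t) / r t)) / r t ^ 2 :=
      hc1.unique (hceq ▸ hc2)
    have hs1 : HasDerivAt (fun s => Real.sin (α s)) (Real.cos (α t) * a t) t :=
      (Real.hasDerivAt_sin (α t)).comp t (had t)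
    have hs2 : HasDerivAt (fun s => dx s / r s)
        ((-(p t * x t) * r t - dx t * (x t * dx t * (1 - p t) / r t)) / r t ^ 2) t :=
      (hx' t).div (hrd t) (ne_of_gt (hrpos t))
    have hseq : (fun s => Real.sin (α s)) = fun s => dx s / r s := funext hsin
    have E2 : Real.cos (α t) * a t
        = (-(p t * x t) * r t - dx t * (x t * dx t * (1 - p t) / r t)) / r t ^ 2 :=
      hs1.unique (hseq ▸ hs2)
    have hpy : Real.cos (α t) ^ 2 + Real.sin (α t) ^ 2 = 1 :=
      Real.cos_sq_add_sin_sq (α t)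
    have hca : Real.cos (α t) = x t / r t := hcos t
    have hsa : Real.sin (α t) = dx t / r t := hsin t
    rw [hsa] at E1
    rw [hca] at E2
    have hrne : r t ≠ 0 := ne_of_gt (hrpos t)
    have hq : r t ^ 2 = x t ^ 2 + dx t ^ 2 := hrsq t
    have hqne : x t ^ 2 + dx t ^ 2 ≠ 0 := ne_of_gt (hpos t)
    -- a = cos α * (sin α)' - sin α * (cos α)'
    have heq : a t = (x t / r t) * ((-(p t * x t) * r t - dx t * (x t * dx t * (1 - p t) / r t)) / r t ^ 2)
        - (dx t / r t) * ((dx t * r t - x t * (x t * dx t * (1 - p t) / r t)) / r t ^ 2) := by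
      rw [← E1, ← E2]
      have hpy2 := hpy
      rw [hca, hsa] at hpy2
      field_simp at hpy2 ⊢
      linear_combination (-(a t)) * hpy2
    rw [heq, ← hq]
    field_simp
    ring
  -- finish
  have hθd : HasDerivAt θ (2 * a t + (1 + p t)) t := by
    have h1 : HasDerivAt (fun s => 2 * α s + φ s) (2 * a t + (1 + p t)) t :=
      ((had t).const_mul 2).add (hφd t)
    exact (funext hθ ▸ h1 :)
  convert hθd using 1
  rw [hθ t, Real.cos_add, Real.sin_add]
  have hc2a : Real.cos (2 * α t) = Real.cos (α t) ^ 2 - Real.sin (α t) ^ 2 := by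
    rw [Real.cos_two_mul, Real.sin_sq]
    ring
  have hs2a : Real.sin (2 * α t) = 2 * Real.sin (α t) * Real.cos (α t) :=
    Real.sin_two_mul (α t)
  rw [hc2a, hs2a, hcos t, hsin t, key]
  have hrne : Real.sqrt (x t ^ 2 + dx t ^ 2) ≠ 0 := ne_of_gt (hrpos t)
  have hq : Real.sqrt (x t ^ 2 + dx t ^ 2) ^ 2 = x t ^ 2 + dx t ^ 2 := hrsq t
  have hqne : x t ^ 2 + dx t ^ 2 ≠ 0 := ne_of_gt (hpos t)
  rw [← hq]
  have hpy : Real.sin (φ t) ^ 2 + Real.cos (φ t) ^ 2 = 1 := Real.sin_sq_add_cos_sq (φ t)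
  field_simp
  simp only [hq]
  linear_combination ((1 - p t) * (x t ^ 2 - dx t ^ 2) * (x t ^ 2 + dx t ^ 2)) * hpy
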